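/- Theorem (admissibility of MSL(ℓ)-SS under uniform loads): Let N ≥ 1, ℓ ∈ ℕ, and let λ be a uniform admissible i.i.d. load, i.e. λ_q = λ₀ for all q with N·λ₀ < 1. Then for any choice of generator permutation π (hence any operational configuration subset S_π), the deviation process (d^t) generated from d⁰ = 0 by any measurable MSL(ℓ)-SS policy on S_π satisfies liminf_{t→∞} E[d_q^t] > −∞ for every VOQ q. -/

import Mathlib

open Finset MeasureTheory ProbabilityTheory

/-- The virtual output queues (VOQs) of an `N×N` input-queued switch, indexed by
input–output port pairs. -/
abbrev VOQ (N : ℕ) := Fin N × Fin N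

/-- The complete configuration vector associated with a permutation `π` of the ports:
`v_π(i,j) = 1` if `j = π(i)` and `0` otherwise. -/
def confVec (N : ℕ) (π : Equiv.Perm (Fin N)) : VOQ N → ℤ :=
  fun q => if q.2 = π q.1 then 1 else 0

/-- The `k`-fold circular shift `C^k(v_π)` of the configuration generated by `π`:
it is the configuration of the permutation `i ↦ π(i − k)`. -/
def confShift (N : ℕ) [NeZero N] (k : ℕ) (π : Equiv.Perm (Fin N)) : VOQ N → ℤ :=
  confVec N ((Equiv.subRight (Fin.ofNat N k)).trans π)

/-- The standard (integer) inner product on `ℤ^{VOQ N}`. -/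
def ipZ (N : ℕ) (a b : VOQ N → ℤ) : ℤ := ∑ q, a q * b q

section A
variable (N : ℕ) [NeZero N] (π : Equiv.Perm (Fin N))

lemma confShift_mem (k : ℕ) (q : VOQ N) : confShift N k π q = 0 ∨ confShift N k π q = 1 := by
  unfold confShift confVec; split <;> simp

lemma confShift_nonneg (k : ℕ) (q : VOQ N) : 0 ≤ confShift N k π q := by
  rcases confShift_mem N π k q with h | h <;> simp [h]

lemma confShift_le_one (k : ℕ) (q : VOQ N) : confShift N k π q ≤ 1 := by
  rcases confShift_mem N π k q with h | h <;> simp [h]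

lemma sum_confShift_card (k : ℕ) : ∑ q, confShift N k π q = N := by
  unfold confShift confVec
  rw [Fintype.sum_prod_type]
  simp [Finset.sum_ite_eq]

lemma sum_range_confShift (q : VOQ N) :
    ∑ k ∈ Finset.range N, confShift N k π q = 1 := by
  have h : ∀ k : Fin N, confShift N k π q = if k = q.1 - π.symm q.2 then 1 else 0 := by
    intro k
    unfold confShift confVec
    simp only [Equiv.trans_apply, Equiv.subRight_apply, Fin.ofNat_val_eq_self]
    congr 1
    rw [eq_iff_iff]
    constructor
    · intro h
      have : π.symm q.2 = q.1 - k := by rw [h]; simp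
      rw [this, sub_sub_cancel]
    · intro h
      subst h
      rw [sub_sub_cancel, Equiv.apply_symm_apply]
  have := Fin.sum_univ_eq_sum_range (fun k => confShift N k π q) N
  rw [← this]
  have : ∀ k : Fin N, confShift N (k : ℕ) π q = confShift N k π q := by
    intro k; rfl
  simp only [h]
  simp
end A

section B
variable (N : ℕ) [NeZero N] (π : Equiv.Perm (Fin N)) (ℓ : ℕ)
  (u : (VOQ N → ℤ) → (VOQ N → ℤ) → (VOQ N → ℤ))
  (hMSLSS : ∀ dv xv : VOQ N → ℤ, ∃ k < N,
      (∀ k' < N,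
        ipZ N (dv - xv) (confShift N k π) ≤ ipZ N (dv - xv) (confShift N k' π)) ∧
      u dv xv = fun q => if (ℓ : ℤ) ≤ dv q - xv q then 0 else confShift N k π q)

include hMSLSS in
lemma u_mem (dv xv : VOQ N → ℤ) (q : VOQ N) : u dv xv q = 0 ∨ u dv xv q = 1 := by
  obtain ⟨k, -, -, hu⟩ := hMSLSS dv xv
  rw [hu]
  dsimp only
  split
  · exact Or.inl rfl
  · exact confShift_mem N π k q

include hMSLSS in
lemma service (dv xv : VOQ N → ℤ)
    (hx0 : ∀ q, 0 ≤ xv q) (hx1 : ∀ q, xv q ≤ 1) :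
    ∑ q, (((ℓ:ℤ)+2) - dv q) - 3*(N:ℤ)^2
      ≤ (N:ℤ) * ∑ q, (((ℓ:ℤ)+2) - dv q) * u dv xv q := by
  obtain ⟨k, hk, hmin, hu⟩ := hMSLSS dv xv
  set L : ℤ := (ℓ:ℤ) + 2 with hL
  set v : VOQ N → ℤ := confShift N k π with hv
  -- min ≤ average
  have hsum : ∑ k' ∈ Finset.range N, ipZ N (dv - xv) (confShift N k' π)
      = ∑ q, (dv q - xv q) := by
    unfold ipZ
    rw [Finset.sum_comm]
    refine Finset.sum_congr rfl fun q _ => ?_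
    rw [← Finset.mul_sum, sum_range_confShift N π q, mul_one]
    simp
  have hNip : (N:ℤ) * ipZ N (dv - xv) v ≤ ∑ q, (dv q - xv q) := by
    rw [← hsum]
    calc (N:ℤ) * ipZ N (dv - xv) v
        = ∑ _k' ∈ Finset.range N, ipZ N (dv - xv) v := by
          rw [Finset.sum_const, Finset.card_range]; ring
      _ ≤ ∑ k' ∈ Finset.range N, ipZ N (dv - xv) (confShift N k' π) :=
          Finset.sum_le_sum fun k' hk' => hmin k' (Finset.mem_range.mp hk')
  -- service sum vs configuration sum
  have h1 : ∑ q, (L - dv q) * v q - 2*(N:ℤ) ≤ ∑ q, (L - dv q) * u dv xv q := by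
    rw [hu]
    have : ∀ q : VOQ N, (L - dv q) * v q - 2 * v q
        ≤ (L - dv q) * (if (ℓ : ℤ) ≤ dv q - xv q then 0 else v q) := by
      intro q
      split
      · rename_i hcond
        have hle : L - dv q ≤ 2 := by
          have := hx0 q
          omega
        have hvn : 0 ≤ v q := confShift_nonneg N π k q
        nlinarith
      · have hvn : 0 ≤ v q := confShift_nonneg N π k q
        nlinarith
    calc ∑ q, (L - dv q) * v q - 2*(N:ℤ)
        = ∑ q, ((L - dv q) * v q - 2 * v q) := by
          rw [Finset.sum_sub_distrib, ← Finset.mul_sum, sum_confShift_card N π k]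
      _ ≤ _ := Finset.sum_le_sum fun q _ => this q
  -- configuration sum vs inner product
  have hcard : ∑ q, v q = (N:ℤ) := sum_confShift_card N π k
  have h2 : L * N - ipZ N (dv - xv) v - N ≤ ∑ q, (L - dv q) * v q := by
    have hxv : ∑ q, xv q * v q ≤ (N:ℤ) := by
      calc ∑ q, xv q * v q ≤ ∑ q, 1 * v q := by
            refine Finset.sum_le_sum fun q _ => ?_
            have := confShift_nonneg N π k q
            have h1q := hx1 q
            nlinarith
        _ = N := by rw [← Finset.mul_sum, hcard]; ring
    have hexp : ∑ q, (L - dv q) * v q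
        = L * (∑ q, v q) - ipZ N (dv - xv) v - ∑ q, xv q * v q := by
      unfold ipZ
      rw [Finset.mul_sum, ← Finset.sum_sub_distrib, ← Finset.sum_sub_distrib]
      refine Finset.sum_congr rfl fun q _ => ?_
      simp only [Pi.sub_apply]
      ring
    rw [hexp, hcard]
    linarith
  have hxsum : (0:ℤ) ≤ ∑ q, xv q := Finset.sum_nonneg fun q _ => hx0 q
  have hcard2 : ∑ q, (L - dv q) = (N:ℤ)^2 * L - ∑ q, dv q := by
    rw [Finset.sum_sub_distrib, Finset.sum_const, Finset.card_univ]
    have : Fintype.card (VOQ N) = N * N := by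
      simp [Fintype.card_prod]
    rw [this]
    push_cast
    ring
  have hdsum : ∑ q : VOQ N, (dv q - xv q) = ∑ q, dv q - ∑ q, xv q :=
    Finset.sum_sub_distrib _ _
  have hN : (0:ℤ) ≤ (N:ℤ) := by positivity
  have hchain : L * N - ipZ N (dv - xv) v - 3*N ≤ ∑ q, (L - dv q) * u dv xv q := by
    linarith
  have : (N:ℤ) * (L * N - ipZ N (dv - xv) v - 3*N)
      ≤ (N:ℤ) * ∑ q, (L - dv q) * u dv xv q :=
    mul_le_mul_of_nonneg_left hchain hN
  nlinarith
end B

noncomputable section C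
variable (N ℓ : ℕ)

def eR (dv : VOQ N → ℤ) (q : VOQ N) : ℝ := ((ℓ:ℝ)+2) - (dv q : ℝ)
def SE (dv : VOQ N → ℤ) : ℝ := ∑ q, eR N ℓ dv q
def SY (dv : VOQ N → ℤ) : ℝ := Real.sqrt (∑ q, (eR N ℓ dv q)^2)
def g0 (θ C₀ : ℝ) (dv : VOQ N → ℤ) : ℝ :=
  Real.exp (θ * SY N ℓ dv) *
    Real.exp (-θ * (SE N ℓ dv / (N * SY N ℓ dv) - C₀ / SY N ℓ dv))
def h0 (θ C₀ K : ℝ) (dv : VOQ N → ℤ) : ℝ :=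
  if K ≤ SY N ℓ dv then g0 N ℓ θ C₀ dv else Real.exp (θ*(K+N))
def h1 (θ C₀ K c₁ : ℝ) (q : VOQ N) (dv : VOQ N → ℤ) : ℝ :=
  if K ≤ SY N ℓ dv then c₁ * θ * g0 N ℓ θ C₀ dv * (eR N ℓ dv q / SY N ℓ dv) else 0

variable {N ℓ}

lemma SY_nonneg (dv : VOQ N → ℤ) : 0 ≤ SY N ℓ dv := Real.sqrt_nonneg _

lemma sq_SY (dv : VOQ N → ℤ) : SY N ℓ dv ^ 2 = ∑ q, (eR N ℓ dv q)^2 := by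
  rw [SY, Real.sq_sqrt]
  positivity

lemma SE_nonneg (dv : VOQ N → ℤ) (he : ∀ q, 0 ≤ eR N ℓ dv q) : 0 ≤ SE N ℓ dv :=
  Finset.sum_nonneg fun q _ => he q

lemma SE_le (dv : VOQ N → ℤ) (he : ∀ q, 0 ≤ eR N ℓ dv q) :
    SE N ℓ dv ≤ N * SY N ℓ dv := by
  have h := sq_sum_le_card_mul_sum_sq (s := (univ : Finset (VOQ N))) (f := eR N ℓ dv)
  have hcard : ((univ : Finset (VOQ N)).card : ℝ) = (N:ℝ)^2 := by
    simp [Finset.card_univ]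
    ring
  have h2 : (SE N ℓ dv)^2 ≤ ((N:ℝ) * SY N ℓ dv)^2 := by
    rw [mul_pow, sq_SY]
    calc (SE N ℓ dv)^2 ≤ ((univ : Finset (VOQ N)).card : ℝ) * ∑ q, (eR N ℓ dv q)^2 := by
          exact_mod_cast h
      _ = (N:ℝ)^2 * ∑ q, (eR N ℓ dv q)^2 := by rw [hcard]
  have hSE := SE_nonneg dv he
  have : (0:ℝ) ≤ (N:ℝ) * SY N ℓ dv := mul_nonneg (Nat.cast_nonneg N) (SY_nonneg dv)
  nlinarith

lemma SY_le_SE (dv : VOQ N → ℤ) (he : ∀ q, 0 ≤ eR N ℓ dv q) :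
    SY N ℓ dv ≤ SE N ℓ dv := by
  have h : ∑ q, (eR N ℓ dv q)^2 ≤ (SE N ℓ dv)^2 :=
    Finset.sum_sq_le_sq_sum_of_nonneg fun q _ => he q
  have := SE_nonneg dv he
  calc SY N ℓ dv ≤ Real.sqrt ((SE N ℓ dv)^2) := Real.sqrt_le_sqrt h
    _ = SE N ℓ dv := by rw [Real.sqrt_sq this]

lemma sqrt_le_add_div (a b : ℝ) (ha : 0 < a) (hb : 0 ≤ b) :
    Real.sqrt b ≤ Real.sqrt a + (b - a) / (2 * Real.sqrt a) := by
  have hsa : 0 < Real.sqrt a := Real.sqrt_pos.mpr ha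
  have hsb : 0 ≤ Real.sqrt b := Real.sqrt_nonneg b
  have ha2 : Real.sqrt a ^ 2 = a := Real.sq_sqrt ha.le
  have hb2 : Real.sqrt b ^ 2 = b := Real.sq_sqrt hb
  have key : 2 * Real.sqrt a * Real.sqrt b ≤ a + b := by
    nlinarith [two_mul_le_add_sq (Real.sqrt a) (Real.sqrt b)]
  rw [← sub_le_iff_le_add', le_div_iff₀ (by positivity)]
  nlinarith

lemma exp_le_one_add (z m : ℝ) (hz : 0 ≤ z) (hzm : z ≤ m) :
    Real.exp z ≤ 1 + z * Real.exp m := by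
  have h1 : 1 - z ≤ Real.exp (-z) := by
    have := Real.add_one_le_exp (-z); linarith
  have h2 : (1 - z) * Real.exp z ≤ 1 := by
    calc (1 - z) * Real.exp z ≤ Real.exp (-z) * Real.exp z :=
          mul_le_mul_of_nonneg_right h1 (Real.exp_pos z).le
      _ = 1 := by rw [← Real.exp_add]; simp
  have h3 : Real.exp z ≤ Real.exp m := Real.exp_le_exp.mpr hzm
  nlinarith [Real.exp_pos z]
end C

section Step
variable {θ C₀ K c₁ : ℝ} {N ℓ : ℕ}

set_option maxHeartbeats 2000000 in
lemma step_pointwise [NeZero N]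
    (hθ : 0 < θ) (hK1 : 1 ≤ K) (hc₁ : c₁ = Real.exp (θ * N))
    (hC₀ : C₀ = 3*(N:ℝ) + (N:ℝ)^2/2)
    (dv xv uv : VOQ N → ℤ)
    (hx : ∀ q, xv q = 0 ∨ xv q = 1) (hu : ∀ q, uv q = 0 ∨ uv q = 1)
    (he : ∀ q, 0 ≤ eR N ℓ dv q) (he' : ∀ q, 0 ≤ eR N ℓ (dv + uv - xv) q)
    (hserv : SE N ℓ dv - 3*(N:ℝ)^2 ≤ (N:ℝ) * ∑ q, eR N ℓ dv q * (uv q : ℝ)) :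
    Real.exp (θ * SY N ℓ (dv + uv - xv))
      ≤ h0 N ℓ θ C₀ K dv + ∑ q, h1 N ℓ θ C₀ K c₁ q dv * (xv q : ℝ) := by
  have hNpos : 0 < (N:ℝ) := by exact_mod_cast Nat.pos_of_ne_zero (NeZero.ne N)
  set dv' := dv + uv - xv with hdv'
  have he'rel : ∀ q, eR N ℓ dv' q = eR N ℓ dv q - (uv q : ℝ) + (xv q : ℝ) := by
    intro q
    simp only [eR, hdv', Pi.sub_apply, Pi.add_apply]
    push_cast
    ring
  have hx0 : ∀ q, (0:ℝ) ≤ (xv q : ℝ) := by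
    intro q; rcases hx q with h | h <;> simp [h]
  have hx1 : ∀ q, (xv q : ℝ) ≤ 1 := by
    intro q; rcases hx q with h | h <;> simp [h]
  have hu0 : ∀ q, (0:ℝ) ≤ (uv q : ℝ) := by
    intro q; rcases hu q with h | h <;> simp [h]
  set Y := SY N ℓ dv with hY
  set E := SE N ℓ dv with hE
  clear_value Y E
  by_cases hcase : K ≤ Y
  · -- top region
    have hY1 : 1 ≤ Y := le_trans hK1 hcase
    have hYpos : 0 < Y := lt_of_lt_of_le one_pos hY1
    have hVpos : 0 < ∑ q, (eR N ℓ dv q)^2 := by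
      have hsq := sq_SY (N:=N) (ℓ:=ℓ) dv
      rw [← hY] at hsq
      nlinarith
    -- quadratic increment bound
    have hptq : ∀ q : VOQ N, eR N ℓ dv' q ^ 2 - eR N ℓ dv q ^2
        ≤ 2 * (eR N ℓ dv q * (xv q:ℝ)) - 2 * (eR N ℓ dv q * (uv q:ℝ)) + 1 := by
      intro q
      rw [he'rel q]
      rcases hx q with h | h <;> rcases hu q with h' | h' <;>
        rw [h, h'] <;> push_cast <;> nlinarith [he q]
    have hVV : ∑ q, (eR N ℓ dv' q)^2 - ∑ q, (eR N ℓ dv q)^2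
        ≤ 2 * ∑ q, eR N ℓ dv q * (xv q:ℝ) - 2 * ∑ q, eR N ℓ dv q * (uv q:ℝ) + (N:ℝ)^2 := by
      have hcard : ∑ _q : VOQ N, (1:ℝ) = (N:ℝ)^2 := by
        rw [Finset.sum_const, Finset.card_univ]
        simp [Fintype.card_prod]
        ring
      calc ∑ q, (eR N ℓ dv' q)^2 - ∑ q, (eR N ℓ dv q)^2
          = ∑ q, ((eR N ℓ dv' q)^2 - (eR N ℓ dv q)^2) := by rw [Finset.sum_sub_distrib]
        _ ≤ ∑ q, (2 * (eR N ℓ dv q * (xv q:ℝ)) - 2 * (eR N ℓ dv q * (uv q:ℝ)) + 1) :=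
            Finset.sum_le_sum fun q _ => hptq q
        _ = _ := by
            rw [Finset.sum_add_distrib, Finset.sum_sub_distrib, ← Finset.mul_sum,
              ← Finset.mul_sum, hcard]
    have hserv' : E / N - 3*(N:ℝ) ≤ ∑ q, eR N ℓ dv q * (uv q:ℝ) := by
      rw [sub_le_iff_le_add, div_le_iff₀ hNpos]
      nlinarith
    have hstep : SY N ℓ dv' ≤ Y + ((∑ q, eR N ℓ dv q * (xv q:ℝ)) - E/N + C₀)/Y := by
      have h1 := sqrt_le_add_div (∑ q, (eR N ℓ dv q)^2) (∑ q, (eR N ℓ dv' q)^2)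
        hVpos (by positivity)
      have hYs : Real.sqrt (∑ q, (eR N ℓ dv q)^2) = Y := by rw [hY]; rfl
      rw [hYs] at h1
      refine le_trans h1 ?_
      have h2 : (∑ q, (eR N ℓ dv' q)^2 - ∑ q, (eR N ℓ dv q)^2) / (2*Y)
          ≤ ((∑ q, eR N ℓ dv q * (xv q:ℝ)) - E/N + C₀)/Y := by
        rw [div_le_div_iff₀ (by positivity) hYpos]
        have h3 : (2:ℝ) * C₀ = 6*(N:ℝ) + (N:ℝ)^2 := by rw [hC₀]; ring
        nlinarith [hVV, hserv', hYpos]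
      linarith
    set A := (∑ q, eR N ℓ dv q * (xv q:ℝ))/Y with hA
    clear_value A
    have hA0 : 0 ≤ A := by
      rw [hA]
      apply div_nonneg _ hYpos.le
      exact Finset.sum_nonneg fun q _ => mul_nonneg (he q) (hx0 q)
    have hAN : A ≤ N := by
      rw [hA, div_le_iff₀ hYpos]
      have h4 : ∑ q, eR N ℓ dv q * (xv q:ℝ) ≤ E := by
        rw [hE, SE]
        refine Finset.sum_le_sum fun q _ => ?_
        nlinarith [he q, hx1 q]
      have := SE_le dv he
      nlinarith
    have hchain : Real.exp (θ * SY N ℓ dv') ≤ g0 N ℓ θ C₀ dv * Real.exp (θ * A) := by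
      have h5 : SY N ℓ dv' ≤ Y + A - E/((N:ℝ)*Y) + C₀/Y := by
        have heq : ((∑ q, eR N ℓ dv q * (xv q:ℝ)) - E/N + C₀)/Y = A - E/((N:ℝ)*Y) + C₀/Y := by
          rw [hA]
          field_simp
        linarith [hstep, heq.le]
      calc Real.exp (θ * SY N ℓ dv') ≤ Real.exp (θ * (Y + A - E/((N:ℝ)*Y) + C₀/Y)) := by
            apply Real.exp_le_exp.mpr
            exact mul_le_mul_of_nonneg_left h5 hθ.le
        _ = g0 N ℓ θ C₀ dv * Real.exp (θ * A) := by
            simp only [g0]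
            rw [← hY, ← hE, ← Real.exp_add, ← Real.exp_add]
            congr 1
            ring
    have hexpA : Real.exp (θ * A) ≤ 1 + c₁ * θ * A := by
      rw [hc₁]
      calc Real.exp (θ * A) ≤ 1 + (θ*A) * Real.exp (θ*(N:ℝ)) :=
            exp_le_one_add (θ*A) (θ*(N:ℝ)) (mul_nonneg hθ.le hA0)
              (mul_le_mul_of_nonneg_left hAN hθ.le)
        _ = 1 + Real.exp (θ * (N:ℝ)) * θ * A := by ring
    have hg0 : 0 ≤ g0 N ℓ θ C₀ dv := by
      simp only [g0]
      exact mul_nonneg (Real.exp_pos _).le (Real.exp_pos _).le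
    have hfin : g0 N ℓ θ C₀ dv * Real.exp (θ * A)
        ≤ h0 N ℓ θ C₀ K dv + ∑ q, h1 N ℓ θ C₀ K c₁ q dv * (xv q : ℝ) := by
      have hh0 : h0 N ℓ θ C₀ K dv = g0 N ℓ θ C₀ dv := by
        simp only [h0, ← hY, if_pos hcase]
      have hh1 : ∑ q, h1 N ℓ θ C₀ K c₁ q dv * (xv q : ℝ)
          = c₁ * θ * g0 N ℓ θ C₀ dv * A := by
        simp only [h1, ← hY, if_pos hcase]
        calc ∑ q, c₁ * θ * g0 N ℓ θ C₀ dv * (eR N ℓ dv q / Y) * (xv q : ℝ)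
            = ∑ q, (c₁ * θ * g0 N ℓ θ C₀ dv * (eR N ℓ dv q * (xv q:ℝ))) / Y := by
              refine Finset.sum_congr rfl fun q _ => ?_
              ring
          _ = (∑ q, c₁ * θ * g0 N ℓ θ C₀ dv * (eR N ℓ dv q * (xv q:ℝ))) / Y := by
              rw [Finset.sum_div]
          _ = (c₁ * θ * g0 N ℓ θ C₀ dv * ∑ q, eR N ℓ dv q * (xv q:ℝ)) / Y := by
              rw [Finset.mul_sum]
          _ = c₁ * θ * g0 N ℓ θ C₀ dv * A := by
              rw [hA]; ring
      rw [hh0, hh1]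
      nlinarith [mul_le_mul_of_nonneg_left hexpA hg0]
    exact le_trans hchain hfin
  · -- bottom region
    have hYnn : 0 ≤ Y := by rw [hY]; exact SY_nonneg dv
    have hd'le : SY N ℓ dv' ≤ Y + (N:ℝ) := by
      have hpt : ∀ q : VOQ N, (eR N ℓ dv' q)^2 ≤ (eR N ℓ dv q + 1)^2 := by
        intro q
        have h1 := he' q
        have h2 : eR N ℓ dv' q ≤ eR N ℓ dv q + 1 := by
          rw [he'rel q]
          have := hu0 q; have := hx1 q
          linarith
        nlinarith
      have hsum : ∑ q, (eR N ℓ dv' q)^2 ≤ (Y + (N:ℝ))^2 := by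
        have hcard : ∑ _q : VOQ N, (1:ℝ) = (N:ℝ)^2 := by
          rw [Finset.sum_const, Finset.card_univ]
          simp [Fintype.card_prod]
          ring
        have h6 : ∑ q, (eR N ℓ dv q + 1)^2
            = ∑ q, (eR N ℓ dv q)^2 + 2*E + (N:ℝ)^2 := by
          rw [hE, SE, Finset.mul_sum]
          rw [← hcard]
          rw [← Finset.sum_add_distrib, ← Finset.sum_add_distrib]
          refine Finset.sum_congr rfl fun q _ => ?_
          ring
        have h7 := SE_le dv he
        have h8 := sq_SY (N:=N) (ℓ:=ℓ) dv
        rw [← hY] at h8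
        rw [← hE] at h7
        calc ∑ q, (eR N ℓ dv' q)^2 ≤ ∑ q, (eR N ℓ dv q + 1)^2 :=
              Finset.sum_le_sum fun q _ => hpt q
          _ = ∑ q, (eR N ℓ dv q)^2 + 2*E + (N:ℝ)^2 := h6
          _ ≤ (Y + (N:ℝ))^2 := by nlinarith
      calc SY N ℓ dv' ≤ Real.sqrt ((Y + (N:ℝ))^2) := Real.sqrt_le_sqrt hsum
        _ = Y + (N:ℝ) := Real.sqrt_sq (by positivity)
    have hval : Real.exp (θ * SY N ℓ dv') ≤ Real.exp (θ * (K + (N:ℝ))) := by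
      apply Real.exp_le_exp.mpr
      apply mul_le_mul_of_nonneg_left _ hθ.le
      push_neg at hcase
      linarith
    have hh0 : h0 N ℓ θ C₀ K dv = Real.exp (θ*(K+(N:ℝ))) := by
      simp only [h0, ← hY, if_neg hcase]
    have hh1 : ∑ q, h1 N ℓ θ C₀ K c₁ q dv * (xv q : ℝ) = 0 := by
      simp [h1, ← hY, if_neg hcase]
    rw [hh0, hh1, add_zero]
    exact hval
end Step

section Mean
variable {θ C₀ K c₁ γ lam0 δ : ℝ} {N ℓ : ℕ}

set_option maxHeartbeats 1000000 in
lemma mean_pointwise [NeZero N]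
    (hθ : 0 < θ) (hγ : 0 < γ) (hK1 : 1 ≤ K)
    (hlam0 : 0 ≤ lam0) (hc₁lam : c₁ * lam0 ≤ 1/(N:ℝ) - γ) (hC₀K : C₀/K ≤ γ/2)
    (hC₀0 : 0 ≤ C₀) (hc₁0 : 0 ≤ c₁) (hδ : δ = 1 - Real.exp (-(θ*γ/2)))
    (dv : VOQ N → ℤ) (he : ∀ q, 0 ≤ eR N ℓ dv q) :
    h0 N ℓ θ C₀ K dv + lam0 * ∑ q, h1 N ℓ θ C₀ K c₁ q dv
      ≤ (1-δ) * Real.exp (θ * SY N ℓ dv) + Real.exp (θ*(K+(N:ℝ))) := by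
  have h1δ : 1 - δ = Real.exp (-(θ*γ/2)) := by rw [hδ]; ring
  by_cases hcase : K ≤ SY N ℓ dv
  · have hY1 : 1 ≤ SY N ℓ dv := le_trans hK1 hcase
    have hYpos : 0 < SY N ℓ dv := lt_of_lt_of_le one_pos hY1
    have hKpos : 0 < K := lt_of_lt_of_le one_pos hK1
    set Y := SY N ℓ dv with hY
    set E := SE N ℓ dv with hE
    have hsle := SY_le_SE dv he
    rw [← hY, ← hE] at hsle
    clear_value Y E
    set s := E / Y with hs
    have hs1 : 1 ≤ s := (one_le_div hYpos).mpr hsle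
    have hh0 : h0 N ℓ θ C₀ K dv = g0 N ℓ θ C₀ dv := by
      simp only [h0, ← hY, if_pos hcase]
    have hh1 : ∑ q, h1 N ℓ θ C₀ K c₁ q dv = c₁ * θ * g0 N ℓ θ C₀ dv * s := by
      simp only [h1, ← hY, if_pos hcase]
      calc ∑ q, c₁ * θ * g0 N ℓ θ C₀ dv * (eR N ℓ dv q / Y)
          = ∑ q, (c₁ * θ * g0 N ℓ θ C₀ dv * eR N ℓ dv q) / Y := by
            refine Finset.sum_congr rfl fun q _ => ?_
            ring
        _ = (∑ q, c₁ * θ * g0 N ℓ θ C₀ dv * eR N ℓ dv q) / Y := by rw [Finset.sum_div]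
        _ = (c₁ * θ * g0 N ℓ θ C₀ dv * ∑ q, eR N ℓ dv q) / Y := by rw [Finset.mul_sum]
        _ = c₁ * θ * g0 N ℓ θ C₀ dv * s := by
            rw [hs, hE, SE]; ring
    have hg0eq : g0 N ℓ θ C₀ dv = Real.exp (θ*Y - θ*(s/(N:ℝ) - C₀/Y)) := by
      simp only [g0, ← hY, ← hE, ← Real.exp_add]
      congr 1
      rw [hs, div_div]
      ring
    rw [hh0, hh1]
    have hg0pos : 0 < g0 N ℓ θ C₀ dv := by rw [hg0eq]; exact Real.exp_pos _
    have hkey : g0 N ℓ θ C₀ dv + lam0 * (c₁ * θ * g0 N ℓ θ C₀ dv * s)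
        = g0 N ℓ θ C₀ dv * (1 + c₁ * lam0 * θ * s) := by ring
    rw [hkey]
    have hw0 : 0 ≤ c₁ * lam0 * θ * s :=
      mul_nonneg (mul_nonneg (mul_nonneg hc₁0 hlam0) hθ.le) (by linarith)
    have hone : 1 + c₁ * lam0 * θ * s ≤ Real.exp (c₁ * lam0 * θ * s) := by
      have := Real.add_one_le_exp (c₁ * lam0 * θ * s)
      linarith
    have hCY : C₀/Y ≤ γ/2 := by
      calc C₀/Y ≤ C₀/K := div_le_div_of_nonneg_left hC₀0 hKpos hcase
        _ ≤ γ/2 := hC₀K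
    have hNpos : 0 < (N:ℝ) := by exact_mod_cast Nat.pos_of_ne_zero (NeZero.ne N)
    have hexpo : θ*Y - θ*(s/(N:ℝ) - C₀/Y) + c₁ * lam0 * θ * s ≤ θ*Y - θ*γ/2 := by
      have hσ : s * (c₁*lam0) - s/(N:ℝ) ≤ -γ := by
        have h2 : s * (c₁*lam0) ≤ s * (1/(N:ℝ) - γ) :=
          mul_le_mul_of_nonneg_left hc₁lam (by linarith)
        have h3 : s * (1/(N:ℝ)) = s/(N:ℝ) := by ring
        nlinarith
      nlinarith [hθ.le]
    calc g0 N ℓ θ C₀ dv * (1 + c₁ * lam0 * θ * s)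
        ≤ Real.exp (θ*Y - θ*(s/(N:ℝ) - C₀/Y)) * Real.exp (c₁ * lam0 * θ * s) := by
          rw [hg0eq]
          exact mul_le_mul_of_nonneg_left hone (Real.exp_pos _).le
      _ = Real.exp (θ*Y - θ*(s/(N:ℝ) - C₀/Y) + c₁ * lam0 * θ * s) := by
          rw [← Real.exp_add]
      _ ≤ Real.exp (θ*Y - θ*γ/2) := Real.exp_le_exp.mpr hexpo
      _ = (1-δ) * Real.exp (θ * Y) := by
          rw [h1δ, ← Real.exp_add]
          congr 1
          ring
      _ ≤ (1-δ) * Real.exp (θ * Y) + Real.exp (θ*(K+(N:ℝ))) := by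
          linarith [Real.exp_pos (θ*(K+(N:ℝ)))]
  · have hh0 : h0 N ℓ θ C₀ K dv = Real.exp (θ*(K+(N:ℝ))) := by
      simp only [h0, if_neg hcase]
    have hh1 : ∑ q, h1 N ℓ θ C₀ K c₁ q dv = 0 := by
      simp [h1, if_neg hcase]
    rw [hh0, hh1, mul_zero, add_zero]
    have : 0 ≤ (1-δ) * Real.exp (θ * SY N ℓ dv) := by
      rw [h1δ]
      positivity
    linarith
end Mean

section P
variable {Ω : Type*} [MeasurableSpace Ω] {μ : Measure Ω} [IsProbabilityMeasure μ]
variable {N : ℕ} [NeZero N]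
variable {x : ℕ → VOQ N → Ω → ℤ}
variable {u : (VOQ N → ℤ) → (VOQ N → ℤ) → (VOQ N → ℤ)}
variable {d : ℕ → Ω → VOQ N → ℤ}

/-- The deterministic recursion computing `d` from the full arrival history. -/
def DD (N : ℕ) (u : (VOQ N → ℤ) → (VOQ N → ℤ) → (VOQ N → ℤ)) :
    ℕ → ((ℕ × VOQ N) → ℤ) → (VOQ N → ℤ)
  | 0, _ => 0
  | (t+1), χ =>
      DD N u t χ + u (DD N u t χ) (fun q => χ (t, q)) - fun q => χ (t, q)

lemma DD_local (u : (VOQ N → ℤ) → (VOQ N → ℤ) → (VOQ N → ℤ)) :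
    ∀ (t : ℕ) (χ χ' : (ℕ × VOQ N) → ℤ),
      (∀ p : ℕ × VOQ N, p.1 < t → χ p = χ' p) → DD N u t χ = DD N u t χ'
  | 0, χ, χ', _ => rfl
  | (t+1), χ, χ', h => by
      have ih := DD_local u t χ χ' (fun p hp => h p (Nat.lt_succ_of_lt hp))
      have hx : (fun q => χ (t, q)) = fun q => χ' (t, q) :=
        funext fun q => h (t, q) (Nat.lt_succ_self t)
      show DD N u t χ + u (DD N u t χ) (fun q => χ (t, q)) - (fun q => χ (t, q))
          = DD N u t χ' + u (DD N u t χ') (fun q => χ' (t, q)) - fun q => χ' (t, q)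
      rw [ih, hx]

lemma d_eq_DD (hd0 : ∀ ω, d 0 ω = 0)
    (hdrec : ∀ t ω, d (t + 1) ω =
      d t ω + u (d t ω) (fun q => x t q ω) - fun q => x t q ω) :
    ∀ t ω, d t ω = DD N u t (fun p => x p.1 p.2 ω)
  | 0, ω => hd0 ω
  | (t+1), ω => by
      rw [hdrec t ω, d_eq_DD hd0 hdrec t ω]
      rfl

lemma d_measurable (hxmeas : ∀ t q, Measurable (x t q))
    (hd0 : ∀ ω, d 0 ω = 0)
    (hdrec : ∀ t ω, d (t + 1) ω =
      d t ω + u (d t ω) (fun q => x t q ω) - fun q => x t q ω) :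
    ∀ t, Measurable (fun ω => d t ω)
  | 0 => by
      have : (fun ω => d 0 ω) = fun _ => (0 : VOQ N → ℤ) := funext hd0
      rw [this]; exact measurable_const
  | (t+1) => by
      have hx : Measurable (fun ω => (fun q => x t q ω)) :=
        measurable_pi_lambda _ fun q => hxmeas t q
      have hF : Measurable (fun p : (VOQ N → ℤ) × (VOQ N → ℤ) =>
          p.1 + u p.1 p.2 - p.2) := measurable_of_countable _
      have : (fun ω => d (t+1) ω) = (fun p : (VOQ N → ℤ) × (VOQ N → ℤ) =>
          p.1 + u p.1 p.2 - p.2) ∘ (fun ω => (d t ω, fun q => x t q ω)) :=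
        funext fun ω => hdrec t ω
      rw [this]
      exact hF.comp ((d_measurable hxmeas hd0 hdrec t).prodMk hx)

lemma indep_d_x
    (hxmeas : ∀ t q, Measurable (x t q))
    (hxindep : iIndepFun (fun p : ℕ × VOQ N => x p.1 p.2) μ)
    (hd0 : ∀ ω, d 0 ω = 0)
    (hdrec : ∀ t ω, d (t + 1) ω =
      d t ω + u (d t ω) (fun q => x t q ω) - fun q => x t q ω)
    (t : ℕ) (q : VOQ N) :
    IndepFun (fun ω => d t ω) (x t q) μ := by
  classical
  set S : Finset (ℕ × VOQ N) := (Finset.range t) ×ˢ Finset.univ with hS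
  set T : Finset (ℕ × VOQ N) := {(t, q)} with hT
  have hdisj : Disjoint S T := by
    rw [hT, Finset.disjoint_singleton_right, hS, Finset.mem_product]
    simp
  have base := hxindep.indepFun_finset S T hdisj (fun p => hxmeas p.1 p.2)
  have hΦ : (fun ω => d t ω)
      = (fun v : ({p : ℕ × VOQ N // p ∈ S} → ℤ) =>
          DD N u t (fun p => if h : p ∈ S then v ⟨p, h⟩ else 0))
        ∘ (fun ω (i : {p : ℕ × VOQ N // p ∈ S}) => x (i : ℕ × VOQ N).1 (i : ℕ × VOQ N).2 ω) := by
    funext ω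
    simp only [Function.comp_apply]
    rw [d_eq_DD hd0 hdrec t ω]
    apply DD_local
    intro p hp
    have hmem : p ∈ S := by
      rw [hS, Finset.mem_product]
      exact ⟨Finset.mem_range.mpr hp, Finset.mem_univ _⟩
    rw [dif_pos hmem]
  have hΨ : x t q
      = (fun v : ({p : ℕ × VOQ N // p ∈ T} → ℤ) => v ⟨(t, q), by rw [hT]; exact Finset.mem_singleton_self _⟩)
        ∘ (fun ω (i : {p : ℕ × VOQ N // p ∈ T}) => x (i : ℕ × VOQ N).1 (i : ℕ × VOQ N).2 ω) := rfl
  rw [hΦ, hΨ]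
  exact base.comp (measurable_of_countable _) (measurable_of_countable _)

lemma integral_x (hx01 : ∀ t q ω, x t q ω = 0 ∨ x t q ω = 1)
    (hxmeas : ∀ t q, Measurable (x t q)) {lam0 : ℝ} (hlam0 : 0 ≤ lam0)
    (hxlaw : ∀ t q, μ {ω | x t q ω = 1} = ENNReal.ofReal lam0)
    (t : ℕ) (q : VOQ N) :
    ∫ ω, (x t q ω : ℝ) ∂μ = lam0 := by
  have hA : MeasurableSet {ω | x t q ω = 1} := hxmeas t q (measurableSet_singleton 1)
  have heq : (fun ω => (x t q ω : ℝ))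
      = Set.indicator {ω | x t q ω = 1} (fun _ => (1:ℝ)) := by
    funext ω
    rcases hx01 t q ω with h | h <;> simp [h, Set.indicator_apply]
  rw [heq]
  rw [MeasureTheory.integral_indicator_const (1:ℝ) hA]
  rw [measureReal_def, hxlaw t q, ENNReal.toReal_ofReal hlam0]
  simp
end P


set_option maxHeartbeats 4000000 in
/-- **Theorem (admissibility of MSL(ℓ)-SS under uniform loads).** For a uniform admissible
i.i.d. load (`λ_q = λ₀` with `N·λ₀ < 1`) on an `N×N` switch (`N ≥ 1`), and any choice of
generator permutation `π` (hence any operational configuration subset `S_π`), the deviation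
process generated from `d⁰ = 0` by any measurable MSL(ℓ)-SS policy on `S_π` satisfies
`liminf_{t→∞} E[d_q^t] > −∞` for every VOQ `q`. -/
theorem stmt10
    {Ω : Type*} [MeasurableSpace Ω] (μ : Measure Ω) [IsProbabilityMeasure μ]
    (N : ℕ) [NeZero N] (ℓ : ℕ)
    (lam0 : ℝ) (hlam0 : 0 < lam0) (hadm : (N : ℝ) * lam0 < 1)
    (x : ℕ → VOQ N → Ω → ℤ)
    (hx01 : ∀ t q ω, x t q ω = 0 ∨ x t q ω = 1)
    (hxmeas : ∀ t q, Measurable (x t q))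
    (hxindep : iIndepFun (fun p : ℕ × VOQ N => x p.1 p.2) μ)
    (hxlaw : ∀ t q, μ {ω | x t q ω = 1} = ENNReal.ofReal lam0)
    (π : Equiv.Perm (Fin N))
    (u : (VOQ N → ℤ) → (VOQ N → ℤ) → (VOQ N → ℤ))
    (humeas : Measurable (Function.uncurry u))
    (hMSLSS : ∀ dv xv : VOQ N → ℤ, ∃ k < N,
      (∀ k' < N,
        ipZ N (dv - xv) (confShift N k π) ≤ ipZ N (dv - xv) (confShift N k' π)) ∧
      u dv xv = fun q => if (ℓ : ℤ) ≤ dv q - xv q then 0 else confShift N k π q)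
    (d : ℕ → Ω → VOQ N → ℤ)
    (hd0 : ∀ ω, d 0 ω = 0)
    (hdrec : ∀ t ω, d (t + 1) ω =
      d t ω + u (d t ω) (fun q => x t q ω) - fun q => x t q ω) :
    ∀ q : VOQ N,
      ⊥ < Filter.liminf
        (fun t : ℕ => ((∫ ω, ((d t ω q : ℝ)) ∂μ : ℝ) : EReal)) Filter.atTop := by
  intro q0
  classical
  -- basic positivity facts
  have hNpos : 0 < (N:ℝ) := by exact_mod_cast Nat.pos_of_ne_zero (NeZero.ne N)
  have hN1 : (1:ℝ) ≤ (N:ℝ) := by exact_mod_cast Nat.one_le_iff_ne_zero.mpr (NeZero.ne N)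
  have hlamlt : lam0 < 1/(N:ℝ) := by
    rw [lt_div_iff₀ hNpos]; linarith [hadm]
  -- constants
  set Lr : ℝ := (ℓ:ℝ) + 2 with hLr
  have hLr0 : 0 ≤ Lr := by positivity
  set γ : ℝ := (1/(N:ℝ) - lam0)/2 with hγdef
  have hγ : 0 < γ := by rw [hγdef]; linarith
  set θ : ℝ := min 1 (γ/((N:ℝ)*Real.exp N + 1)) with hθdef
  have hden : 0 < (N:ℝ)*Real.exp N + 1 := by positivity
  have hθpos : 0 < θ := lt_min one_pos (div_pos hγ hden)
  have hθ1 : θ ≤ 1 := min_le_left _ _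
  set c₁ : ℝ := Real.exp (θ*(N:ℝ)) with hc₁def
  have hc₁0 : 0 ≤ c₁ := (Real.exp_pos _).le
  set C₀ : ℝ := 3*(N:ℝ) + (N:ℝ)^2/2 with hC₀def
  have hC₀0 : 0 ≤ C₀ := by rw [hC₀def]; positivity
  set K : ℝ := max 1 (2*C₀/γ) with hKdef
  have hK1 : 1 ≤ K := le_max_left _ _
  have hKpos : 0 < K := lt_of_lt_of_le one_pos hK1
  have hC₀K : C₀/K ≤ γ/2 := by
    rw [div_le_div_iff₀ hKpos two_pos]
    have h2 : 2*C₀/γ ≤ K := le_max_right _ _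
    rw [div_le_iff₀ hγ] at h2
    linarith
  set δ : ℝ := 1 - Real.exp (-(θ*γ/2)) with hδdef
  have hδpos : 0 < δ := by
    rw [hδdef, sub_pos]
    apply Real.exp_lt_one_iff.mpr
    have : 0 < θ*γ/2 := by positivity
    linarith
  have h1δ0 : 0 ≤ 1 - δ := by
    rw [hδdef]
    have := (Real.exp_pos (-(θ*γ/2))).le
    linarith
  have hc₁lam : c₁ * lam0 ≤ 1/(N:ℝ) - γ := by
    have hθle : θ ≤ γ/((N:ℝ)*Real.exp N + 1) := min_le_right _ _
    have h1 : θ * ((N:ℝ)*Real.exp N) ≤ γ := by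
      calc θ * ((N:ℝ)*Real.exp N)
          ≤ (γ/((N:ℝ)*Real.exp N + 1)) * ((N:ℝ)*Real.exp N) :=
            mul_le_mul_of_nonneg_right hθle (by positivity)
        _ ≤ γ := by
            rw [div_mul_eq_mul_div, div_le_iff₀ hden]
            nlinarith [hγ, Real.exp_pos (N:ℝ), hNpos]
    have hlam1 : lam0 ≤ 1 := by
      have h2 : 1/(N:ℝ) ≤ 1 := by
        rw [div_le_one hNpos]; exact hN1
      linarith
    have hc₁le : c₁ ≤ 1 + θ*((N:ℝ)*Real.exp N) := by
      rw [hc₁def]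
      calc Real.exp (θ*(N:ℝ)) ≤ 1 + (θ*(N:ℝ)) * Real.exp (N:ℝ) :=
            exp_le_one_add _ _ (by positivity) (by nlinarith)
        _ = 1 + θ*((N:ℝ)*Real.exp N) := by ring
    have h3 : c₁ * lam0 ≤ (1 + θ*((N:ℝ)*Real.exp N)) * lam0 :=
      mul_le_mul_of_nonneg_right hc₁le hlam0.le
    have h4 : θ*((N:ℝ)*Real.exp N)*lam0 ≤ γ := by
      nlinarith [mul_nonneg (mul_nonneg hθpos.le (by positivity : (0:ℝ) ≤ (N:ℝ)*Real.exp N)) hlam0.le]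
    rw [hγdef] at *
    nlinarith
  set M : ℝ := max (Real.exp (θ*((N:ℝ)*Lr))) (Real.exp (θ*(K+(N:ℝ)))/δ) with hMdef
  have hM1 : Real.exp (θ*((N:ℝ)*Lr)) ≤ M := by rw [hMdef]; exact le_max_left _ _
  have hM2 : Real.exp (θ*(K+(N:ℝ)))/δ ≤ M := by rw [hMdef]; exact le_max_right _ _
  clear_value Lr γ θ c₁ C₀ K δ M
  -- process bounds
  have hdmeas := d_measurable (d := d) hxmeas hd0 hdrec
  have hx0 : ∀ t ω (qq : VOQ N), (0:ℤ) ≤ x t qq ω := by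
    intro t ω qq; rcases hx01 t qq ω with h|h <;> omega
  have hx1 : ∀ t ω (qq : VOQ N), x t qq ω ≤ 1 := by
    intro t ω qq; rcases hx01 t qq ω with h|h <;> omega
  have hdub : ∀ t ω (qq : VOQ N), d t ω qq ≤ (ℓ:ℤ)+2 := by
    intro t
    induction t with
    | zero => intro ω qq; rw [hd0]; simp; omega
    | succ t ih =>
      intro ω qq
      rw [hdrec t ω]
      simp only [Pi.sub_apply, Pi.add_apply]
      obtain ⟨k, -, -, hu⟩ := hMSLSS (d t ω) (fun q => x t q ω)
      rw [hu]
      have hxu := hx1 t ω qq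
      have hxl := hx0 t ω qq
      have hih := ih ω qq
      dsimp only
      split
      · omega
      · rcases confShift_mem N π k qq with h|h <;> omega
  have hdlb : ∀ (t : ℕ) (ω : Ω) (qq : VOQ N), -(t:ℤ) ≤ d t ω qq := by
    intro t
    induction t with
    | zero => intro ω qq; rw [hd0]; simp
    | succ t ih =>
      intro ω qq
      rw [hdrec t ω]
      simp only [Pi.sub_apply, Pi.add_apply]
      have hxu := hx1 t ω qq
      have hih := ih ω qq
      have huq : u (d t ω) (fun q => x t q ω) qq = 0 ∨
          u (d t ω) (fun q => x t q ω) qq = 1 :=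
        u_mem N π ℓ u hMSLSS _ _ qq
      push_cast
      omega
  have he0 : ∀ t ω (qq : VOQ N), 0 ≤ eR N ℓ (d t ω) qq := by
    intro t ω qq
    have := hdub t ω qq
    simp only [eR, hLr]
    have : ((d t ω qq : ℝ)) ≤ (ℓ:ℝ)+2 := by exact_mod_cast this
    linarith
  have heub : ∀ t ω (qq : VOQ N), eR N ℓ (d t ω) qq ≤ Lr + t := by
    intro t ω qq
    have := hdlb t ω qq
    simp only [eR, hLr]
    have : -(t:ℝ) ≤ ((d t ω qq : ℝ)) := by exact_mod_cast this
    linarith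
  -- SY upper bound
  have hSYub : ∀ t ω, SY N ℓ (d t ω) ≤ (N:ℝ)*(Lr + t) := by
    intro t ω
    have hBnn : 0 ≤ Lr + (t:ℝ) := add_nonneg hLr0 (Nat.cast_nonneg t)
    have hsum : ∑ qq, (eR N ℓ (d t ω) qq)^2 ≤ ((N:ℝ)*(Lr+t))^2 := by
      have hcard : ∑ _qq : VOQ N, ((Lr + (t:ℝ))^2) = (N:ℝ)^2 * (Lr+t)^2 := by
        rw [Finset.sum_const, Finset.card_univ]
        have hc : Fintype.card (VOQ N) = N*N := by simp
        rw [hc]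
        push_cast
        ring
      calc ∑ qq, (eR N ℓ (d t ω) qq)^2 ≤ ∑ _qq : VOQ N, ((Lr + (t:ℝ))^2) :=
            Finset.sum_le_sum fun qq _ => by nlinarith [he0 t ω qq, heub t ω qq]
        _ = ((N:ℝ)*(Lr+t))^2 := by rw [hcard]; ring
    calc SY N ℓ (d t ω) ≤ Real.sqrt (((N:ℝ)*(Lr+t))^2) := Real.sqrt_le_sqrt hsum
      _ = (N:ℝ)*(Lr+t) := Real.sqrt_sq (mul_nonneg hNpos.le hBnn)
  -- integrability helper
  have hInteg : ∀ (t : ℕ) (g : (VOQ N → ℤ) → ℝ) (C : ℝ),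
      (∀ ω, |g (d t ω)| ≤ C) → Integrable (fun ω => g (d t ω)) μ := by
    intro t g C hbd
    refine Integrable.mono' (integrable_const C)
      (((measurable_of_countable g).comp (hdmeas t)).aestronglyMeasurable) ?_
    exact ae_of_all μ fun ω => by rw [Real.norm_eq_abs]; exact hbd ω
  -- bounds on h0, h1 composed with d t
  have hg0bd : ∀ t ω, K ≤ SY N ℓ (d t ω) →
      g0 N ℓ θ C₀ (d t ω) ≤ Real.exp (θ*((N:ℝ)*(Lr+t) + C₀)) := by
    intro t ω htop
    have hY1 : 1 ≤ SY N ℓ (d t ω) := le_trans hK1 htop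
    have hYpos : 0 < SY N ℓ (d t ω) := lt_of_lt_of_le one_pos hY1
    simp only [g0]
    rw [← Real.exp_add]
    apply Real.exp_le_exp.mpr
    have hE0 : 0 ≤ SE N ℓ (d t ω) := SE_nonneg _ (he0 t ω)
    have h5 : 0 ≤ SE N ℓ (d t ω) / ((N:ℝ) * SY N ℓ (d t ω)) :=
      div_nonneg hE0 (mul_nonneg hNpos.le (SY_nonneg _))
    have h6 : C₀ / SY N ℓ (d t ω) ≤ C₀ := by
      rw [div_le_iff₀ hYpos]; nlinarith
    have h7 := hSYub t ω
    have e1 : 0 ≤ θ * (SE N ℓ (d t ω) / ((N:ℝ) * SY N ℓ (d t ω))) := mul_nonneg hθpos.le h5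
    have e2 : θ * (C₀ / SY N ℓ (d t ω)) ≤ θ * C₀ := mul_le_mul_of_nonneg_left h6 hθpos.le
    have e3 : θ * SY N ℓ (d t ω) ≤ θ * ((N:ℝ)*(Lr+(t:ℝ))) := mul_le_mul_of_nonneg_left h7 hθpos.le
    have e4 : θ * SY N ℓ (d t ω)
          + -θ * (SE N ℓ (d t ω) / ((N:ℝ) * SY N ℓ (d t ω)) - C₀ / SY N ℓ (d t ω))
        = θ * SY N ℓ (d t ω) - θ * (SE N ℓ (d t ω) / ((N:ℝ) * SY N ℓ (d t ω)))
          + θ * (C₀ / SY N ℓ (d t ω)) := by ring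
    have e5 : θ*((N:ℝ)*(Lr+(t:ℝ)) + C₀) = θ * ((N:ℝ)*(Lr+(t:ℝ))) + θ * C₀ := by ring
    linarith [e1, e2, e3, e4, e5]
  have hh0bd : ∀ t ω, |h0 N ℓ θ C₀ K (d t ω)|
      ≤ Real.exp (θ*((N:ℝ)*(Lr+t) + C₀)) + Real.exp (θ*(K+(N:ℝ))) := by
    intro t ω
    simp only [h0]
    split
    · rename_i htop
      rw [abs_of_nonneg]
      · linarith [hg0bd t ω htop, (Real.exp_pos (θ*(K+(N:ℝ)))).le]
      · simp only [g0]
        positivity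
    · rw [abs_of_nonneg (Real.exp_pos _).le]
      linarith [(Real.exp_pos (θ*((N:ℝ)*(Lr+t) + C₀))).le]
  have hh1bd : ∀ t ω (qq : VOQ N), |h1 N ℓ θ C₀ K c₁ qq (d t ω)|
      ≤ c₁*θ*Real.exp (θ*((N:ℝ)*(Lr+t) + C₀))*(N:ℝ) := by
    intro t ω qq
    simp only [h1]
    split
    · rename_i htop
      have hY1 : 1 ≤ SY N ℓ (d t ω) := le_trans hK1 htop
      have hYpos : 0 < SY N ℓ (d t ω) := lt_of_lt_of_le one_pos hY1
      have heq : eR N ℓ (d t ω) qq / SY N ℓ (d t ω) ≤ (N:ℝ) := by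
        rw [div_le_iff₀ hYpos]
        have h8 : eR N ℓ (d t ω) qq ≤ SE N ℓ (d t ω) :=
          Finset.single_le_sum (f := fun qq => eR N ℓ (d t ω) qq)
            (fun i _ => he0 t ω i) (Finset.mem_univ qq)
        have h9 := SE_le (d t ω) (he0 t ω)
        nlinarith
      have hnn : 0 ≤ eR N ℓ (d t ω) qq / SY N ℓ (d t ω) :=
        div_nonneg (he0 t ω qq) hYpos.le
      have hgnn : 0 ≤ g0 N ℓ θ C₀ (d t ω) := by simp only [g0]; positivity
      have hcθ : 0 ≤ c₁*θ := mul_nonneg hc₁0 hθpos.le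
      rw [abs_of_nonneg (mul_nonneg (mul_nonneg hcθ hgnn) hnn)]
      calc c₁ * θ * g0 N ℓ θ C₀ (d t ω) * (eR N ℓ (d t ω) qq / SY N ℓ (d t ω))
          ≤ c₁ * θ * g0 N ℓ θ C₀ (d t ω) * (N:ℝ) :=
            mul_le_mul_of_nonneg_left heq (mul_nonneg hcθ hgnn)
        _ ≤ c₁*θ*Real.exp (θ*((N:ℝ)*(Lr+t) + C₀))*(N:ℝ) :=
            mul_le_mul_of_nonneg_right
              (mul_le_mul_of_nonneg_left (hg0bd t ω htop) hcθ) hNpos.le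
    · simp only [abs_zero]
      exact mul_nonneg (mul_nonneg (mul_nonneg hc₁0 hθpos.le) (Real.exp_pos _).le) hNpos.le
  -- integrability of the main objects
  have hZint : ∀ t, Integrable (fun ω => Real.exp (θ * SY N ℓ (d t ω))) μ := by
    intro t
    apply hInteg t (fun dv => Real.exp (θ * SY N ℓ dv)) (Real.exp (θ*((N:ℝ)*(Lr+t))))
    intro ω
    rw [abs_of_nonneg (Real.exp_pos _).le]
    apply Real.exp_le_exp.mpr
    exact mul_le_mul_of_nonneg_left (hSYub t ω) hθpos.le
  have hxcast_int : ∀ t (qq : VOQ N), Integrable (fun ω => (x t qq ω : ℝ)) μ := by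
    intro t qq
    refine Integrable.mono' (integrable_const 1)
      ((measurable_of_countable (fun z : ℤ => (z:ℝ))).comp (hxmeas t qq)).aestronglyMeasurable ?_
    refine ae_of_all μ fun ω => ?_
    rw [Real.norm_eq_abs]
    rcases hx01 t qq ω with h|h <;> simp [h]
  -- the expectation recursion
  have hrec : ∀ t, ∫ ω, Real.exp (θ * SY N ℓ (d (t+1) ω)) ∂μ
      ≤ (1-δ) * ∫ ω, Real.exp (θ * SY N ℓ (d t ω)) ∂μ + Real.exp (θ*(K+(N:ℝ))) := by
    intro t
    -- pointwise step bound
    have hpt : ∀ ω, Real.exp (θ * SY N ℓ (d (t+1) ω))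
        ≤ h0 N ℓ θ C₀ K (d t ω) + ∑ qq, h1 N ℓ θ C₀ K c₁ qq (d t ω) * (x t qq ω : ℝ) := by
      intro ω
      have hd1 : d (t+1) ω = d t ω + u (d t ω) (fun q => x t q ω) - (fun q => x t q ω) :=
        hdrec t ω
      have hservZ := service N π ℓ u hMSLSS (d t ω) (fun q => x t q ω)
        (fun qq => hx0 t ω qq) (fun qq => hx1 t ω qq)
      have hservR : SE N ℓ (d t ω) - 3*(N:ℝ)^2
          ≤ (N:ℝ) * ∑ qq, eR N ℓ (d t ω) qq * ((u (d t ω) (fun q => x t q ω)) qq : ℝ) := by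
        simp only [SE, eR]
        exact_mod_cast hservZ
      have hstep := step_pointwise (N := N) (ℓ := ℓ) hθpos hK1 hc₁def hC₀def
        (d t ω) (fun q => x t q ω) (u (d t ω) (fun q => x t q ω))
        (fun qq => hx01 t qq ω) (u_mem N π ℓ u hMSLSS _ _)
        (he0 t ω) (by rw [← hd1]; exact he0 (t+1) ω) hservR
      rw [← hd1] at hstep
      exact hstep
    have hinth0 : Integrable (fun ω => h0 N ℓ θ C₀ K (d t ω)) μ :=
      hInteg t _ _ (hh0bd t)
    have hinth1 : ∀ qq : VOQ N, Integrable (fun ω => h1 N ℓ θ C₀ K c₁ qq (d t ω)) μ :=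
      fun qq => hInteg t _ _ (fun ω => hh1bd t ω qq)
    have hinth1x : ∀ qq : VOQ N,
        Integrable (fun ω => h1 N ℓ θ C₀ K c₁ qq (d t ω) * (x t qq ω : ℝ)) μ := by
      intro qq
      have hm1 : Measurable (fun ω => h1 N ℓ θ C₀ K c₁ qq (d t ω)) :=
        (measurable_of_countable (h1 N ℓ θ C₀ K c₁ qq)).comp' (hdmeas t)
      have hm2 : Measurable (fun ω => ((x t qq ω : ℤ) : ℝ)) :=
        (measurable_of_countable (fun z : ℤ => (z:ℝ))).comp' (hxmeas t qq)
      refine Integrable.mono' (integrable_const (c₁*θ*Real.exp (θ*((N:ℝ)*(Lr+t) + C₀))*(N:ℝ)))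
        ((hm1.mul hm2).aestronglyMeasurable) ?_
      refine ae_of_all μ fun ω => ?_
      rw [Real.norm_eq_abs, abs_mul]
      have h10 := hh1bd t ω qq
      have h11 : |(x t qq ω : ℝ)| ≤ 1 := by
        rcases hx01 t qq ω with h|h <;> simp [h]
      have h12 : 0 ≤ |h1 N ℓ θ C₀ K c₁ qq (d t ω)| := abs_nonneg _
      nlinarith
    have hintsum : Integrable
        (fun ω => ∑ qq, h1 N ℓ θ C₀ K c₁ qq (d t ω) * (x t qq ω : ℝ)) μ :=
      integrable_finset_sum _ fun qq _ => hinth1x qq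
    -- independence: cross terms
    have hcross : ∀ qq : VOQ N,
        ∫ ω, h1 N ℓ θ C₀ K c₁ qq (d t ω) * (x t qq ω : ℝ) ∂μ
        = lam0 * ∫ ω, h1 N ℓ θ C₀ K c₁ qq (d t ω) ∂μ := by
      intro qq
      have hind : IndepFun (fun ω => h1 N ℓ θ C₀ K c₁ qq (d t ω))
          (fun ω => (x t qq ω : ℝ)) μ := by
        have := (indep_d_x (d := d) hxmeas hxindep hd0 hdrec t qq).comp
          (measurable_of_countable (h1 N ℓ θ C₀ K c₁ qq))
          (measurable_of_countable (fun z : ℤ => (z:ℝ)))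
        simpa [Function.comp_def] using this
      have := hind.integral_fun_mul_eq_mul_integral (hinth1 qq).aestronglyMeasurable (hxcast_int t qq).aestronglyMeasurable
      have hxint := integral_x hx01 hxmeas hlam0.le hxlaw t qq
      calc ∫ ω, h1 N ℓ θ C₀ K c₁ qq (d t ω) * (x t qq ω : ℝ) ∂μ
          = (∫ ω, h1 N ℓ θ C₀ K c₁ qq (d t ω) ∂μ) * ∫ ω, (x t qq ω : ℝ) ∂μ := this
        _ = lam0 * ∫ ω, h1 N ℓ θ C₀ K c₁ qq (d t ω) ∂μ := by rw [hxint]; ring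
    -- combine
    have hmean : ∀ ω, h0 N ℓ θ C₀ K (d t ω) + lam0 * ∑ qq, h1 N ℓ θ C₀ K c₁ qq (d t ω)
        ≤ (1-δ) * Real.exp (θ * SY N ℓ (d t ω)) + Real.exp (θ*(K+(N:ℝ))) :=
      fun ω => mean_pointwise hθpos hγ hK1 hlam0.le hc₁lam hC₀K hC₀0 hc₁0 hδdef
        (d t ω) (he0 t ω)
    calc ∫ ω, Real.exp (θ * SY N ℓ (d (t+1) ω)) ∂μ
        ≤ ∫ ω, (h0 N ℓ θ C₀ K (d t ω)
            + ∑ qq, h1 N ℓ θ C₀ K c₁ qq (d t ω) * (x t qq ω : ℝ)) ∂μ :=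
          integral_mono (hZint (t+1)) (hinth0.add hintsum) hpt
      _ = (∫ ω, h0 N ℓ θ C₀ K (d t ω) ∂μ)
            + ∑ qq, ∫ ω, h1 N ℓ θ C₀ K c₁ qq (d t ω) * (x t qq ω : ℝ) ∂μ := by
          rw [integral_add hinth0 hintsum, integral_finset_sum _ fun qq _ => hinth1x qq]
      _ = (∫ ω, h0 N ℓ θ C₀ K (d t ω) ∂μ)
            + ∑ qq, lam0 * ∫ ω, h1 N ℓ θ C₀ K c₁ qq (d t ω) ∂μ := by
          rw [Finset.sum_congr rfl fun qq _ => hcross qq]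
      _ = ∫ ω, (h0 N ℓ θ C₀ K (d t ω) + lam0 * ∑ qq, h1 N ℓ θ C₀ K c₁ qq (d t ω)) ∂μ := by
          rw [← Finset.mul_sum, ← integral_finset_sum _ fun qq _ => hinth1 qq,
            ← integral_const_mul, ← integral_add hinth0]
          exact (integrable_finset_sum _ fun qq _ => hinth1 qq).const_mul lam0
      _ ≤ ∫ ω, ((1-δ) * Real.exp (θ * SY N ℓ (d t ω)) + Real.exp (θ*(K+(N:ℝ)))) ∂μ := by
          apply integral_mono _ _ hmean
          · exact (hinth0.add ((integrable_finset_sum _ fun qq _ => hinth1 qq).const_mul lam0))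
          · exact ((hZint t).const_mul _).add (integrable_const _)
      _ = (1-δ) * ∫ ω, Real.exp (θ * SY N ℓ (d t ω)) ∂μ + Real.exp (θ*(K+(N:ℝ))) := by
          rw [integral_add ((hZint t).const_mul _) (integrable_const _),
            integral_const_mul, integral_const]
          simp
  -- uniform bound on E Z t
  have hEZ : ∀ t, ∫ ω, Real.exp (θ * SY N ℓ (d t ω)) ∂μ ≤ M := by
    intro t
    induction t with
    | zero =>
      have hSY0 : ∀ ω, SY N ℓ (d 0 ω) = (N:ℝ)*Lr := by
        intro ω
        rw [hd0 ω]
        simp only [SY, eR, Pi.zero_apply, Int.cast_zero, sub_zero]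
        have hcard : ∑ _qq : VOQ N, ((ℓ:ℝ)+2)^2 = ((N:ℝ)*Lr)^2 := by
          rw [Finset.sum_const, Finset.card_univ]
          simp [Fintype.card_prod, hLr]
          ring
        rw [hcard, Real.sqrt_sq (mul_nonneg hNpos.le hLr0)]
      have : (fun ω => Real.exp (θ * SY N ℓ (d 0 ω)))
          = fun _ => Real.exp (θ * ((N:ℝ)*Lr)) := by
        funext ω; rw [hSY0 ω]
      rw [this, integral_const]
      simp only [probReal_univ, one_smul]
      exact hM1
    | succ t ih =>
      have h13 : Real.exp (θ*(K+(N:ℝ))) ≤ δ * M := by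
        have h14 : Real.exp (θ*(K+(N:ℝ)))/δ ≤ M := hM2
        rw [div_le_iff₀ hδpos] at h14
        linarith
      have h15 : (1-δ) * ∫ ω, Real.exp (θ * SY N ℓ (d t ω)) ∂μ ≤ (1-δ) * M :=
        mul_le_mul_of_nonneg_left ih h1δ0
      calc ∫ ω, Real.exp (θ * SY N ℓ (d (t+1) ω)) ∂μ
          ≤ (1-δ) * ∫ ω, Real.exp (θ * SY N ℓ (d t ω)) ∂μ + Real.exp (θ*(K+(N:ℝ))) := hrec t
        _ ≤ (1-δ)*M + δ*M := by linarith
        _ = M := by ring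
  -- conclusion
  have hfinal : ∀ t, Lr - ((N:ℝ)/θ)*M ≤ ∫ ω, ((d t ω q0 : ℝ)) ∂μ := by
    intro t
    have hptw : ∀ ω, Lr - ((N:ℝ)/θ) * Real.exp (θ * SY N ℓ (d t ω)) ≤ (d t ω q0 : ℝ) := by
      intro ω
      have h16 : eR N ℓ (d t ω) q0 ≤ SE N ℓ (d t ω) :=
        Finset.single_le_sum (f := fun qq => eR N ℓ (d t ω) qq)
          (fun i _ => he0 t ω i) (Finset.mem_univ q0)
      have h17 := SE_le (d t ω) (he0 t ω)
      have h18 : θ * SY N ℓ (d t ω) ≤ Real.exp (θ * SY N ℓ (d t ω)) := by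
        have := Real.add_one_le_exp (θ * SY N ℓ (d t ω))
        linarith
      have h19 : (d t ω q0 : ℝ) = Lr - eR N ℓ (d t ω) q0 := by
        simp [eR, hLr]
      rw [h19]
      have h20 : eR N ℓ (d t ω) q0 ≤ ((N:ℝ)/θ) * Real.exp (θ * SY N ℓ (d t ω)) := by
        rw [div_mul_eq_mul_div, le_div_iff₀ hθpos]
        calc eR N ℓ (d t ω) q0 * θ ≤ ((N:ℝ) * SY N ℓ (d t ω)) * θ := by nlinarith
          _ = (N:ℝ) * (θ * SY N ℓ (d t ω)) := by ring
          _ ≤ (N:ℝ) * Real.exp (θ * SY N ℓ (d t ω)) :=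
              mul_le_mul_of_nonneg_left h18 hNpos.le
      linarith
    have hdint : Integrable (fun ω => (d t ω q0 : ℝ)) μ := by
      have := hInteg t (fun dv => ((dv q0 : ℤ) : ℝ)) (Lr + t) ?_
      · exact this
      · intro ω
        rw [abs_le]
        constructor
        · have := heub t ω q0
          simp only [eR, hLr] at this
          linarith
        · have := he0 t ω q0
          simp only [eR, hLr] at this
          have hLt : (0:ℝ) ≤ (t:ℝ) := by positivity
          linarith
    have hlhs : Integrable (fun ω => Lr - ((N:ℝ)/θ) * Real.exp (θ * SY N ℓ (d t ω))) μ :=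
      (integrable_const Lr).sub ((hZint t).const_mul _)
    calc Lr - ((N:ℝ)/θ)*M
        ≤ Lr - ((N:ℝ)/θ) * ∫ ω, Real.exp (θ * SY N ℓ (d t ω)) ∂μ := by
          have : ((N:ℝ)/θ) * ∫ ω, Real.exp (θ * SY N ℓ (d t ω)) ∂μ ≤ ((N:ℝ)/θ) * M :=
            mul_le_mul_of_nonneg_left (hEZ t) (div_nonneg hNpos.le hθpos.le)
          linarith
      _ = ∫ ω, (Lr - ((N:ℝ)/θ) * Real.exp (θ * SY N ℓ (d t ω))) ∂μ := by
          rw [integral_sub (integrable_const Lr) ((hZint t).const_mul _),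
            integral_const_mul, integral_const]
          simp
      _ ≤ ∫ ω, ((d t ω q0 : ℝ)) ∂μ := integral_mono hlhs hdint hptw
  have hclift : ∀ t : ℕ, ((Lr - ((N:ℝ)/θ)*M : ℝ) : EReal)
      ≤ ((∫ ω, ((d t ω q0 : ℝ)) ∂μ : ℝ) : EReal) := by
    intro t
    exact_mod_cast hfinal t
  calc (⊥ : EReal) < ((Lr - ((N:ℝ)/θ)*M : ℝ) : EReal) := EReal.bot_lt_coe _
    _ ≤ Filter.liminf (fun t : ℕ => ((∫ ω, ((d t ω q0 : ℝ)) ∂μ : ℝ) : EReal)) Filter.atTop :=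
      Filter.le_liminf_of_le (by isBoundedDefault) (Filter.Eventually.of_forall hclift)
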